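/- Consider on ℝ³ with coordinates (x⁻, x, x⁺) the Lorentzian metric g = 2 dx⁺(dx⁻ + e^{2ax} dx⁺) + dx², where a ≠ 0 is a real constant. Then the vector field K = a x⁺ ∂₊ - a x⁻ ∂₋ - ∂ₓ is a Killing vector field of g, i.e. the Lie derivative L_K g = 0. -/

import Mathlib

open Real

/-- The metric components of `g = 2 dx⁺(dx⁻ + e^{2ax} dx⁺) + dx²` on `ℝ³` with
coordinates `(x⁻, x, x⁺)` indexed by `0, 1, 2`. -/
noncomputable def ppMetric3 (a : ℝ) (p : Fin 3 → ℝ) : Matrix (Fin 3) (Fin 3) ℝ :=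
  !![0, 0, 1; 0, 1, 0; 1, 0, 2 * exp (2 * a * p 1)]

/-- The vector field `K = a x⁺ ∂₊ - a x⁻ ∂₋ - ∂ₓ` on `ℝ³`. -/
def ppKilling3 (a : ℝ) (p : Fin 3 → ℝ) : Fin 3 → ℝ :=
  ![-(a * p 0), -1, a * p 2]

lemma hproj (p : Fin 3 → ℝ) (k : Fin 3) :
    HasFDerivAt (fun q : Fin 3 → ℝ => q k)
      (ContinuousLinearMap.proj (R := ℝ) (φ := fun _ : Fin 3 => ℝ) k) p :=
  (ContinuousLinearMap.proj (R := ℝ) (φ := fun _ : Fin 3 => ℝ) k).hasFDerivAt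

lemma fderiv_cexp (a : ℝ) (p v : Fin 3 → ℝ) :
    fderiv ℝ (fun q : Fin 3 → ℝ => 2 * exp (2 * a * q 1)) p v
      = 4 * a * exp (2 * a * p 1) * v 1 := by
  have h := ((((hproj p 1).const_mul (2 * a)).exp).const_mul 2).fderiv
  rw [h]; simp; ring

lemma fderiv_lin (c : ℝ) (p v : Fin 3 → ℝ) (k : Fin 3) :
    fderiv ℝ (fun q : Fin 3 → ℝ => c * q k) p v = c * v k := by
  rw [((hproj p k).const_mul c).fderiv]; simp

lemma fderiv_neglin (c : ℝ) (p v : Fin 3 → ℝ) (k : Fin 3) :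
    fderiv ℝ (fun q : Fin 3 → ℝ => -(c * q k)) p v = -(c * v k) := by
  rw [show (fun q : Fin 3 → ℝ => -(c * q k)) = -(fun y => c * y k) from rfl,
    (((hproj p k).const_mul c).neg).fderiv]; simp

/-- On `ℝ³` with the pp-wave metric `g = 2 dx⁺(dx⁻ + e^{2ax} dx⁺) + dx²`,
`a ≠ 0`, the vector field `K = a x⁺ ∂₊ - a x⁻ ∂₋ - ∂ₓ` is a Killing vector
field: in coordinates,
`(L_K g)_{ij} = Kᵏ ∂ₖ g_{ij} + g_{kj} ∂ᵢ Kᵏ + g_{ik} ∂ⱼ Kᵏ = 0`. -/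
theorem ppwave3_killing (a : ℝ) (ha : a ≠ 0) (p : Fin 3 → ℝ) (i j : Fin 3) :
    (∑ k, (ppKilling3 a p k *
          fderiv ℝ (fun q => ppMetric3 a q i j) p (Pi.single k 1)
        + ppMetric3 a p k j * fderiv ℝ (fun q => ppKilling3 a q k) p (Pi.single i 1)
        + ppMetric3 a p i k * fderiv ℝ (fun q => ppKilling3 a q k) p (Pi.single j 1)))
      = 0 := by
  fin_cases i <;> fin_cases j <;>
    simp [ppMetric3, ppKilling3, Fin.sum_univ_three, fderiv_cexp, fderiv_neglin, fderiv_lin,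
      Pi.single_eq_same, Pi.single_eq_of_ne] <;> ring
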